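/- In the group L = ⟨a_1,…,a_M, b_1,…,b_N | b_1^2,…,b_N^2⟩ (the free product of M copies of ℤ and N copies of C_2) with symmetric generating set X = {a_1^{±1},…,a_M^{±1}, b_1,…,b_N}, the number of cyclically reduced words of length k > 0 is (2M+N−1)^k + (−1)^k (M+N−1) + M. -/

import Mathlib

/-- The generating alphabet of `L = ⟨a_1,…,a_M, b_1,…,b_N | b_j^2⟩`:
`inl i` is `a_i`, `inr (inl i)` is `a_i⁻¹`, and `inr (inr j)` is `b_j`. -/
def Letter (M N : ℕ) : Type := Fin M ⊕ (Fin M ⊕ Fin N)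

/-- Formal inversion of a letter: it swaps `a_i` and `a_i⁻¹` and fixes each `b_j`. -/
def linv {M N : ℕ} : Letter M N → Letter M N
  | .inl i => .inr (.inl i)
  | .inr (.inl i) => .inl i
  | .inr (.inr j) => .inr (.inr j)

section Words

variable {α : Type*}

/-- Reduced words of length `k` whose (head, last) pair satisfies `Q`. -/
def Wrd (f : α → α) (Q : α → α → Prop) (k : ℕ) : Type _ :=
  {w : List α // w.length = k ∧ List.Chain' (fun x y => y ≠ f x) w ∧
    ∀ h ∈ w.head?, ∀ l ∈ w.getLast?, Q h l}

def Qt : α → α → Prop := fun _ _ => True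

lemma wne {f : α → α} {Q : α → α → Prop} {k : ℕ} (hk : k ≠ 0) (w : Wrd f Q k) :
    w.1 ≠ [] := by
  intro h
  apply hk
  rw [← w.2.1, h]
  rfl

def hd {f : α → α} {Q : α → α → Prop} {k : ℕ} (hk : k ≠ 0) (w : Wrd f Q k) : α :=
  w.1.head (wne hk w)

def lst {f : α → α} {Q : α → α → Prop} {k : ℕ} (hk : k ≠ 0) (w : Wrd f Q k) : α :=
  w.1.getLast (wne hk w)

lemma cond_iff {f : α → α} {Q : α → α → Prop} {k : ℕ} (hk : k ≠ 0) (w : Wrd f Q k)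
    (Q' : α → α → Prop) :
    (∀ h ∈ w.1.head?, ∀ l ∈ w.1.getLast?, Q' h l) ↔ Q' (hd hk w) (lst hk w) := by
  rw [List.head?_eq_head (wne hk w), List.getLast?_eq_getLast (wne hk w)]
  simp [hd, lst]

instance {f : α → α} {Q : α → α → Prop} {k : ℕ} [Finite α] : Finite (Wrd f Q k) := by
  apply Finite.of_injective
    (fun w : Wrd f Q k => fun i : Fin k => w.1.get (Fin.cast w.2.1.symm i))
  intro w v h
  apply Subtype.ext
  apply List.ext_get (w.2.1.trans v.2.1.symm)
  intro i h1 h2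
  have hwk := w.2.1
  have := congrFun h ⟨i, by omega⟩
  simpa using this

/-- Forget the head/last condition. -/
def retop {f : α → α} {Q : α → α → Prop} {k : ℕ} (w : Wrd f Q k) : Wrd f (Qt (α := α)) k :=
  ⟨w.1, w.2.1, w.2.2.1, fun _ _ _ _ => trivial⟩

lemma concat_mem {f : α → α} {k : ℕ} (Q : α → α → Prop) (hk : k ≠ 0)
    (v : Wrd f (Qt (α := α)) k) (x : α)
    (h1 : x ≠ f (lst hk v)) (h2 : Q (hd hk v) x) :
    (v.1 ++ [x]).length = k + 1 ∧ List.Chain' (fun a b => b ≠ f a) (v.1 ++ [x]) ∧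
      ∀ h ∈ (v.1 ++ [x]).head?, ∀ l ∈ (v.1 ++ [x]).getLast?, Q h l := by
  refine ⟨by simp [v.2.1], ?_, ?_⟩
  · change List.IsChain _ _
    rw [List.isChain_append]
    refine ⟨v.2.2.1, List.isChain_singleton x, ?_⟩
    intro a ha y hy
    rw [List.getLast?_eq_getLast (wne hk v)] at ha
    simp only [List.head?_cons, Option.mem_def, Option.some_inj] at ha hy
    subst ha; subst hy
    exact h1
  · intro h hh l hl
    rw [List.getLast?_concat] at hl
    rw [List.head?_append, List.head?_eq_head (wne hk v)] at hh
    simp only [Option.mem_def, Option.some_inj, Option.or] at hh hl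
    subst hh; subst hl
    exact h2

/-- Key decomposition: a word of length `k+1` is a reduced word of length `k` plus
a compatible last letter. -/
lemma card_wrd_succ (f : α → α) (Q : α → α → Prop) (k : ℕ) (hk : k ≠ 0) :
    Nat.card (Wrd f Q (k + 1)) =
      Nat.card {p : Wrd f (Qt (α := α)) k × α //
        p.2 ≠ f (lst hk p.1) ∧ Q (hd hk p.1) p.2} := by
  symm
  apply Nat.card_eq_of_bijective
    (fun p => (⟨p.1.1.1 ++ [p.1.2], concat_mem Q hk p.1.1 p.1.2 p.2.1 p.2.2⟩ : Wrd f Q (k+1)))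
  constructor
  · rintro ⟨⟨v1, x1⟩, h1⟩ ⟨⟨v2, x2⟩, h2⟩ he
    have he' : v1.1 ++ [x1] = v2.1 ++ [x2] := congrArg Subtype.val he
    have hv : v1.1 = v2.1 := by
      have := congrArg List.dropLast he'
      simpa using this
    have hx : x1 = x2 := by
      have := congrArg List.getLast? he'
      simpa [List.getLast?_concat] using this
    exact Subtype.ext (Prod.ext (Subtype.ext hv) hx)
  · rintro ⟨w, hlen, hred, hQ⟩
    have hne : w ≠ [] := by intro h; subst h; simp at hlen
    have hkey : w.dropLast ++ [w.getLast hne] = w := List.dropLast_append_getLast hne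
    have hlen' : w.dropLast.length = k := by simp [hlen]
    have hdne : w.dropLast ≠ [] := by
      intro h
      rw [h] at hlen'
      exact hk hlen'.symm
    have hred' := hred
    rw [← hkey] at hred'
    change List.IsChain _ _ at hred'
    rw [List.isChain_append] at hred'
    have hv : Wrd f (Qt (α := α)) k := ⟨w.dropLast, hlen', hred'.1, fun _ _ _ _ => trivial⟩
    set v : Wrd f (Qt (α := α)) k := ⟨w.dropLast, hlen', hred'.1, fun _ _ _ _ => trivial⟩
    have hcomp : w.getLast hne ≠ f (lst hk v) := by
      apply hred'.2.2
      · rw [List.getLast?_eq_getLast hdne]; rfl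
      · simp
    have hh : w.head? = some (hd hk v) := by
      conv_lhs => rw [← hkey]
      rw [List.head?_append, List.head?_eq_head hdne]
      rfl
    have hl : w.getLast? = some (w.getLast hne) := List.getLast?_eq_getLast hne
    have hQ' : Q (hd hk v) (w.getLast hne) := hQ _ hh _ hl
    exact ⟨⟨⟨v, w.getLast hne⟩, hcomp, hQ'⟩, Subtype.ext hkey⟩

/-- Counting reduced words: each extension has `|α| - 1` choices. -/
lemma card_wrd_top_succ [Fintype α] [DecidableEq α] [Nonempty α] (f : α → α) (k : ℕ)
    (hk : k ≠ 0) :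
    Nat.card (Wrd f (Qt (α := α)) (k + 1)) =
      Nat.card (Wrd f (Qt (α := α)) k) * (Nat.card α - 1) := by
  rw [card_wrd_succ f (Qt (α := α)) k hk]
  obtain ⟨c⟩ := ‹Nonempty α›
  have e : {p : Wrd f (Qt (α := α)) k × α //
      p.2 ≠ f (lst hk p.1) ∧ Qt (hd hk p.1) p.2} ≃ Wrd f (Qt (α := α)) k × {y : α // y ≠ c} :=
    { toFun := fun p => (p.1.1, ⟨Equiv.swap (f (lst hk p.1.1)) c p.1.2, by
        intro h
        apply p.2.1
        have h2 := congrArg (Equiv.swap (f (lst hk p.1.1)) c) h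
        rwa [Equiv.swap_apply_self, Equiv.swap_apply_right] at h2⟩)
      invFun := fun q => ⟨(q.1, Equiv.swap (f (lst hk q.1)) c q.2.1), by
        refine ⟨?_, trivial⟩
        intro h
        apply q.2.2
        have h2 := congrArg (Equiv.swap (f (lst hk q.1)) c) h
        rwa [Equiv.swap_apply_self, Equiv.swap_apply_left] at h2⟩
      left_inv := fun p => by
        apply Subtype.ext
        exact Prod.ext rfl (Equiv.swap_apply_self _ _ _)
      right_inv := fun q => by
        refine Prod.ext rfl (Subtype.ext ?_)
        exact Equiv.swap_apply_self _ _ _ }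
  rw [Nat.card_congr e, Nat.card_prod]
  congr 1
  rw [Nat.card_eq_fintype_card, Nat.card_eq_fintype_card]
  simpa [Fintype.card_subtype_eq] using Fintype.card_subtype_compl (fun y : α => y = c)

/-- Reduced words of length `k+1` with head equal to last correspond to
cyclically reduced words of length `k`. -/
lemma card_wrd_eq_succ (f : α → α) (k : ℕ) (hk : k ≠ 0) :
    Nat.card (Wrd f (fun h l => h = l) (k + 1)) =
      Nat.card (Wrd f (fun h l => h ≠ f l) k) := by
  rw [card_wrd_succ f _ k hk]
  symm
  apply Nat.card_eq_of_bijective (fun v => ⟨(retop v, hd hk (retop v)),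
    (cond_iff hk v _).1 v.2.2.2, rfl⟩)
  constructor
  · intro v w h
    have h1 := congrArg Subtype.val h
    have h2 := congrArg Prod.fst h1
    have h3 : (retop v).1 = (retop w).1 := congrArg Subtype.val h2
    exact Subtype.ext h3
  · rintro ⟨⟨v, x⟩, hne, hx⟩
    dsimp only at hne hx
    refine ⟨⟨v.1, v.2.1, v.2.2.1, (cond_iff hk (retop (f := f) v) (fun h l => h ≠ f l)).2 ?_⟩, ?_⟩
    · show hd hk v ≠ f (lst hk v)
      rw [hx]
      exact hne
    · apply Subtype.ext
      refine Prod.ext (Subtype.ext rfl) ?_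
      show hd hk (retop v) = x
      exact hx

/-- Reduced words of length `k+1` with head the inverse of the last correspond to
reduced words of length `k` with head distinct from last. -/
lemma card_wrd_inv_succ (f : α → α) (hf : ∀ a, f (f a) = a) (k : ℕ) (hk : k ≠ 0) :
    Nat.card (Wrd f (fun h l => h = f l) (k + 1)) =
      Nat.card (Wrd f (fun h l => h ≠ l) k) := by
  have hinj : Function.Injective f := Function.LeftInverse.injective hf
  rw [card_wrd_succ f _ k hk]
  symm
  apply Nat.card_eq_of_bijective (fun v => ⟨(retop v, f (hd hk (retop v))),
    fun h => ((cond_iff hk v _).1 v.2.2.2) (hinj h), (hf _).symm⟩)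
  constructor
  · intro v w h
    have h1 := congrArg Subtype.val h
    have h2 := congrArg Prod.fst h1
    have h3 : (retop v).1 = (retop w).1 := congrArg Subtype.val h2
    exact Subtype.ext h3
  · rintro ⟨⟨v, x⟩, hne, hx⟩
    dsimp only at hne hx
    have hxe : x = f (hd hk v) := by
      have := congrArg f hx
      rw [hf] at this
      exact this.symm
    refine ⟨⟨v.1, v.2.1, v.2.2.1, (cond_iff hk (retop (f := f) v) (fun h l => h ≠ l)).2 ?_⟩, ?_⟩
    · show hd hk v ≠ lst hk v
      intro h
      apply hne
      rw [hxe, h]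
    · apply Subtype.ext
      refine Prod.ext (Subtype.ext rfl) ?_
      show f (hd hk (retop v)) = x
      exact hxe.symm

lemma card_wrd_partition [Finite α] (f : α → α) (Q : α → α → Prop) (k : ℕ) (hk : k ≠ 0) :
    Nat.card (Wrd f Q k) + Nat.card (Wrd f (fun h l => ¬ Q h l) k) =
      Nat.card (Wrd f (Qt (α := α)) k) := by
  classical
  rw [← Nat.card_sum]
  apply Nat.card_eq_of_bijective (Sum.elim retop retop)
  constructor
  · rintro (v | v) (w | w) h
    · have h' : (retop v : Wrd f (Qt (α := α)) k) = retop w := h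
      have hval : v.1 = w.1 := by simpa [retop] using congrArg Subtype.val h'
      exact congrArg Sum.inl (Subtype.ext hval)
    · exfalso
      have hval : v.1 = w.1 := congrArg Subtype.val h
      have h1 := (cond_iff hk v Q).1 v.2.2.2
      have h2 := (cond_iff hk w (fun h l => ¬ Q h l)).1 w.2.2.2
      apply h2
      have hh : hd hk w = hd hk v := by simp only [hd, hval]
      have hl : lst hk w = lst hk v := by simp only [lst, hval]
      rw [hh, hl]
      exact h1
    · exfalso
      have hval : v.1 = w.1 := congrArg Subtype.val h
      have h1 := (cond_iff hk v (fun h l => ¬ Q h l)).1 v.2.2.2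
      have h2 := (cond_iff hk w Q).1 w.2.2.2
      apply h1
      have hh : hd hk v = hd hk w := by simp only [hd, hval]
      have hl : lst hk v = lst hk w := by simp only [lst, hval]
      rw [hh, hl]
      exact h2
    · have h' : (retop v : Wrd f (Qt (α := α)) k) = retop w := h
      have hval : v.1 = w.1 := by simpa [retop] using congrArg Subtype.val h'
      exact congrArg Sum.inr (Subtype.ext hval)
  · intro w
    by_cases hQ : Q (hd hk w) (lst hk w)
    · exact ⟨Sum.inl ⟨w.1, w.2.1, w.2.2.1, (cond_iff hk (retop w) Q).2 hQ⟩, Subtype.ext rfl⟩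
    · exact ⟨Sum.inr ⟨w.1, w.2.1, w.2.2.1,
        (cond_iff hk (retop w) (fun h l => ¬ Q h l)).2 hQ⟩, Subtype.ext rfl⟩

lemma card_wrd_one (f : α → α) (Q : α → α → Prop) :
    Nat.card (Wrd f Q 1) = Nat.card {x : α // Q x x} := by
  symm
  apply Nat.card_eq_of_bijective
    (fun x => (⟨[x.1], rfl, List.isChain_singleton _, by simpa using x.2⟩ : Wrd f Q 1))
  constructor
  · intro x y h
    have : [x.1] = [y.1] := congrArg Subtype.val h
    exact Subtype.ext (by simpa using this)
  · rintro ⟨w, hlen, hred, hQ⟩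
    obtain ⟨a, rfl⟩ := List.length_eq_one_iff.1 hlen
    exact ⟨⟨a, hQ a rfl a rfl⟩, rfl⟩

end Words

section LetterFacts

instance (M N : ℕ) : Fintype (Letter M N) :=
  inferInstanceAs (Fintype (Fin M ⊕ (Fin M ⊕ Fin N)))

instance (M N : ℕ) : DecidableEq (Letter M N) :=
  inferInstanceAs (DecidableEq (Fin M ⊕ (Fin M ⊕ Fin N)))

lemma card_letter (M N : ℕ) : Nat.card (Letter M N) = 2 * M + N := by
  have : Nat.card (Fin M ⊕ (Fin M ⊕ Fin N)) = 2 * M + N := by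
    simp [Nat.card_sum]
    ring
  exact this

lemma linv_linv {M N : ℕ} (x : Letter M N) : linv (linv x) = x := by
  rcases x with i | i | j <;> rfl

def neEquiv (M N : ℕ) : {x : Letter M N // x ≠ linv x} ≃ (Fin M ⊕ Fin M) where
  toFun := fun x => match x with
    | ⟨.inl i, _⟩ => .inl i
    | ⟨.inr (.inl i), _⟩ => .inr i
    | ⟨.inr (.inr j), h⟩ => absurd rfl h
  invFun := fun s => match s with
    | .inl i => ⟨.inl i, by simp [linv]; exact Sum.inl_ne_inr⟩
    | .inr i => ⟨.inr (.inl i), by simp [linv]; exact Sum.inr_ne_inl⟩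
  left_inv := by
    rintro ⟨i | i | j, h⟩
    · rfl
    · rfl
    · exact absurd rfl h
  right_inv := by rintro (i | i) <;> rfl

lemma card_ne_linv (M N : ℕ) : Nat.card {x : Letter M N // x ≠ linv x} = 2 * M := by
  rw [Nat.card_congr (neEquiv M N), Nat.card_sum]
  simp
  ring

end LetterFacts


/-- in the free product of `M` copies of `ℤ` and `N` copies of `C_2`, with
the standard symmetric generating set of size `2M+N`, the number of cyclically reduced
words of length `k > 0` is `(2M+N-1)^k + (-1)^k (M+N-1) + M`.  A word is reduced if no
letter is followed by its formal inverse, and cyclically reduced if moreover its first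
letter is not the formal inverse of its last letter. -/
theorem stmt3 (M N k : ℕ) (hk : 0 < k) :
    (Nat.card {w : List (Letter M N) //
        w.length = k ∧
        List.Chain' (fun x y => y ≠ linv x) w ∧
        ∀ h ∈ w.head?, ∀ l ∈ w.getLast?, h ≠ linv l} : ℤ)
      = (2 * (M : ℤ) + N - 1) ^ k + (-1) ^ k * ((M : ℤ) + N - 1) + M := by
  have hkne : k ≠ 0 := hk.ne'
  show (Nat.card (Wrd linv (fun h l : Letter M N => h ≠ linv l) k) : ℤ) = _
  by_cases hMN : M = 0 ∧ N = 0
  · obtain ⟨rfl, rfl⟩ := hMN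
    have hemp : IsEmpty (Letter 0 0) := by
      constructor
      rintro (i | i | j)
      · exact i.elim0
      · exact i.elim0
      · exact j.elim0
    have he : IsEmpty (Wrd linv (fun h l : Letter 0 0 => h ≠ linv l) k) :=
      ⟨fun w => hemp.false (hd hkne w)⟩
    rw [Nat.card_of_isEmpty]
    push_cast
    ring
  · have : Nonempty (Letter M N) := by
      rcases Nat.eq_zero_or_pos M with hM | hM
      · have hN : N ≠ 0 := fun h => hMN ⟨hM, h⟩
        exact ⟨.inr (.inr ⟨0, Nat.pos_of_ne_zero hN⟩)⟩
      · exact ⟨.inl ⟨0, hM⟩⟩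
    set n : ℤ := 2 * (M : ℤ) + N with hn
    have hcard : (Nat.card (Letter M N) : ℤ) = n := by
      rw [card_letter]; push_cast; ring
    have hcard1 : 1 ≤ Nat.card (Letter M N) := Nat.card_pos
    have hR1 : (Nat.card (Wrd linv (Qt (α := Letter M N)) 1) : ℤ) = n := by
      rw [card_wrd_one, Nat.card_congr (Equiv.subtypeUnivEquiv
        (p := fun x : Letter M N => Qt x x) (fun _ => trivial))]
      exact hcard
    have hRsucc : ∀ j, j ≠ 0 → (Nat.card (Wrd linv (Qt (α := Letter M N)) (j + 1)) : ℤ)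
        = (Nat.card (Wrd linv (Qt (α := Letter M N)) j) : ℤ) * (n - 1) := by
      intro j hj
      rw [card_wrd_top_succ linv j hj, Nat.cast_mul, Nat.cast_sub hcard1, hcard, Nat.cast_one]
    have hRclosed : ∀ j, (Nat.card (Wrd linv (Qt (α := Letter M N)) (j + 1)) : ℤ)
        = n * (n - 1) ^ j := by
      intro j
      induction j with
      | zero => simpa using hR1
      | succ m ih =>
        rw [hRsucc (m + 1) (Nat.succ_ne_zero m), ih]
        ring
    have hC1 : (Nat.card (Wrd linv (fun h l : Letter M N => h ≠ linv l) 1) : ℤ) = 2 * M := by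
      rw [card_wrd_one, card_ne_linv]
      push_cast
      ring
    have hF1 : (Nat.card (Wrd linv (fun h l : Letter M N => h = l) 1) : ℤ) = n := by
      rw [card_wrd_one, Nat.card_congr (Equiv.subtypeUnivEquiv
        (p := fun x : Letter M N => x = x) (fun _ => rfl))]
      exact hcard
    suffices H : ∀ j, j ≠ 0 → (Nat.card (Wrd linv (fun h l : Letter M N => h ≠ linv l) j) : ℤ)
        = (n - 1) ^ j + (-1) ^ j * ((M : ℤ) + N - 1) + M by
      exact H k hkne
    intro j
    induction j using Nat.strong_induction_on with
    | _ j ih =>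
      intro hj
      rcases j with _ | j
      · exact absurd rfl hj
      rcases j with _ | m
      · -- j = 1
        have goal1 : (Nat.card (Wrd linv (fun h l : Letter M N => h ≠ linv l) 1) : ℤ)
            = (n - 1) ^ (1 : ℕ) + (-1) ^ (1 : ℕ) * ((M : ℤ) + N - 1) + M := by
          rw [hC1, hn]
          push_cast
          ring
        exact goal1
      · -- j = m + 2
        have hB2 : Nat.card (Wrd linv (fun h l : Letter M N => h = linv l) (m + 1 + 1))
            = Nat.card (Wrd linv (fun h l : Letter M N => h ≠ l) (m + 1)) :=
          card_wrd_inv_succ linv linv_linv (m + 1) (Nat.succ_ne_zero m)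
        have hPC : Nat.card (Wrd linv (fun h l : Letter M N => h = linv l) (m + 1 + 1))
              + Nat.card (Wrd linv (fun h l : Letter M N => h ≠ linv l) (m + 1 + 1))
            = Nat.card (Wrd linv (Qt (α := Letter M N)) (m + 1 + 1)) :=
          card_wrd_partition linv _ (m + 1 + 1) (Nat.succ_ne_zero _)
        have hPF : Nat.card (Wrd linv (fun h l : Letter M N => h = l) (m + 1))
              + Nat.card (Wrd linv (fun h l : Letter M N => h ≠ l) (m + 1))
            = Nat.card (Wrd linv (Qt (α := Letter M N)) (m + 1)) :=
          card_wrd_partition linv _ (m + 1) (Nat.succ_ne_zero _)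
        have hR2 := hRclosed (m + 1)
        have hR1' := hRclosed m
        have hFval : (Nat.card (Wrd linv (fun h l : Letter M N => h = l) (m + 1)) : ℤ)
            = (n - 1) ^ m + (-1) ^ m * ((M : ℤ) + N - 1) + M := by
          rcases Nat.eq_zero_or_pos m with rfl | hm
          · have : ((n - 1) ^ (0 : ℕ) + (-1) ^ (0 : ℕ) * ((M : ℤ) + N - 1) + M) = n := by
              rw [hn]; push_cast; ring
            rw [this]
            exact hF1
          · rw [card_wrd_eq_succ linv m hm.ne']
            exact ih m (by omega) hm.ne'
        have hPC' : (Nat.card (Wrd linv (fun h l : Letter M N => h = linv l) (m + 1 + 1)) : ℤ)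
              + (Nat.card (Wrd linv (fun h l : Letter M N => h ≠ linv l) (m + 1 + 1)) : ℤ)
            = (Nat.card (Wrd linv (Qt (α := Letter M N)) (m + 1 + 1)) : ℤ) := by
          exact_mod_cast hPC
        have hPF' : (Nat.card (Wrd linv (fun h l : Letter M N => h = l) (m + 1)) : ℤ)
              + (Nat.card (Wrd linv (fun h l : Letter M N => h ≠ l) (m + 1)) : ℤ)
            = (Nat.card (Wrd linv (Qt (α := Letter M N)) (m + 1)) : ℤ) := by
          exact_mod_cast hPF
        have hB2' : (Nat.card (Wrd linv (fun h l : Letter M N => h = linv l) (m + 1 + 1)) : ℤ)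
            = (Nat.card (Wrd linv (fun h l : Letter M N => h ≠ l) (m + 1)) : ℤ) := by
          exact_mod_cast hB2
        simp only [pow_succ] at hR2 ⊢
        linear_combination hPC' - hPF' - hB2' + hFval + hR2 - hR1'
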